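/- The generalized Heisenberg algebra H(f) is a commutative K-algebra if and only if f = t. In that case H(f) is isomorphic to the polynomial ring K[t,x,y]. -/

import Mathlib

/- STATEMENT 9: the generalized Heisenberg algebra H(f) is commutative iff f = t,
in which case it is isomorphic to the polynomial ring K[t,x,y]. -/

noncomputable section

open FreeAlgebra Polynomial

variable (K : Type) [Field K]

/-- Relations of the generalized Heisenberg algebra `H(f)`. t = ι 0, x = ι 1, y = ι 2. -/
inductive ghaRel (f : Polynomial K) : FreeAlgebra K (Fin 3) → FreeAlgebra K (Fin 3) → Prop
  | r1 : ghaRel f (ι K (0 : Fin 3) * ι K (1 : Fin 3))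
      (ι K (1 : Fin 3) * Polynomial.aeval (ι K (0 : Fin 3)) f)
  | r2 : ghaRel f (ι K (2 : Fin 3) * ι K (0 : Fin 3))
      (Polynomial.aeval (ι K (0 : Fin 3)) f * ι K (2 : Fin 3))
  | r3 : ghaRel f (ι K (2 : Fin 3) * ι K (1 : Fin 3) - ι K (1 : Fin 3) * ι K (2 : Fin 3))
      (Polynomial.aeval (ι K (0 : Fin 3)) f - ι K (0 : Fin 3))

/-- The generalized Heisenberg algebra `H(f)`. -/
abbrev GHA (f : Polynomial K) := RingQuot (ghaRel K f)


namespace GhaAux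

def lam (f : Polynomial K) : ℕ → RatFunc K
  | 0 => RatFunc.X
  | n+1 => Polynomial.aeval (lam f n) f

abbrev V (K : Type) [Field K] := ℕ →₀ RatFunc K

def Tq (f : Polynomial K) : Module.End K (V K) :=
  Finsupp.lsum K fun n => (Finsupp.lsingle n).comp (LinearMap.mulLeft K (lam K f n))

def Xq : Module.End K (V K) :=
  Finsupp.lsum K fun n => Finsupp.lsingle (n+1)

def Yq (f : Polynomial K) : Module.End K (V K) :=
  Finsupp.lsum K fun n => (Finsupp.lsingle (n-1)).comp
    (LinearMap.mulLeft K (lam K f n - lam K f 0))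

variable {K}

@[simp] lemma Tq_single (f : Polynomial K) (n : ℕ) (a : RatFunc K) :
    Tq K f (Finsupp.single n a) = Finsupp.single n (lam K f n * a) := by
  simp [Tq]

@[simp] lemma Xq_single (n : ℕ) (a : RatFunc K) :
    Xq K (Finsupp.single n a) = Finsupp.single (n+1) a := by
  simp [Xq]

@[simp] lemma Yq_single (f : Polynomial K) (n : ℕ) (a : RatFunc K) :
    Yq K f (Finsupp.single n a) = Finsupp.single (n-1) ((lam K f n - lam K f 0) * a) := by
  simp [Yq]

lemma Tq_pow (f : Polynomial K) (k n : ℕ) (a : RatFunc K) :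
    (Tq K f ^ k) (Finsupp.single n a) = Finsupp.single n (lam K f n ^ k * a) := by
  induction k generalizing a with
  | zero => simp
  | succ k ih => simp only [pow_succ, Module.End.mul_apply, Tq_single, ih]; ring_nf

lemma aeval_Tq (f p : Polynomial K) (n : ℕ) (a : RatFunc K) :
    (Polynomial.aeval (Tq K f) p) (Finsupp.single n a)
      = Finsupp.single n (Polynomial.aeval (lam K f n) p * a) := by
  induction p using Polynomial.induction_on' with
  | add p q hp hq => simp [map_add, LinearMap.add_apply, hp, hq, Finsupp.single_add, add_mul]
  | monomial k c =>
      rw [aeval_monomial, aeval_monomial, Module.End.mul_apply, Tq_pow,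
        Module.algebraMap_end_apply, Finsupp.smul_single, Algebra.smul_def]
      ring_nf

variable (K)

def Phi (f : Polynomial K) : FreeAlgebra K (Fin 3) →ₐ[K] Module.End K (V K) :=
  FreeAlgebra.lift K ![Tq K f, Xq K, Yq K f]

variable {K}

lemma Phi_rel (f : Polynomial K) : ∀ ⦃u v⦄, ghaRel K f u v → Phi K f u = Phi K f v := by
  intro u v h
  induction h with
  | r1 =>
      rw [map_mul, map_mul, ← Polynomial.aeval_algHom_apply]
      simp only [Phi, FreeAlgebra.lift_ι_apply, Matrix.cons_val_zero, Matrix.cons_val_one,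
        Matrix.head_cons]
      apply Finsupp.lhom_ext
      intro n a
      simp only [Module.End.mul_apply, Tq_single, Xq_single, aeval_Tq]
      rfl
  | r2 =>
      rw [map_mul, map_mul, ← Polynomial.aeval_algHom_apply]
      simp only [Phi, FreeAlgebra.lift_ι_apply, Matrix.cons_val_zero, Matrix.cons_val_one,
        Matrix.head_cons, Matrix.cons_val_two, Matrix.tail_cons]
      apply Finsupp.lhom_ext
      intro n a
      simp only [Module.End.mul_apply, Tq_single, Yq_single, aeval_Tq]
      cases n with
      | zero => simp [sub_self]
      | succ m =>
          simp only [Nat.add_sub_cancel]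
          rw [show Polynomial.aeval (lam K f m) f = lam K f (m+1) from rfl]
          congr 1
          ring
  | r3 =>
      rw [map_sub, map_sub, map_mul, map_mul, ← Polynomial.aeval_algHom_apply]
      simp only [Phi, FreeAlgebra.lift_ι_apply, Matrix.cons_val_zero, Matrix.cons_val_one,
        Matrix.head_cons, Matrix.cons_val_two, Matrix.tail_cons]
      apply Finsupp.lhom_ext
      intro n a
      simp only [LinearMap.sub_apply, Module.End.mul_apply, Tq_single, Xq_single, Yq_single,
        aeval_Tq]
      cases n with
      | zero =>
          rw [show Polynomial.aeval (lam K f 0) f = lam K f 1 from rfl]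
          simp only [sub_self, zero_mul, Finsupp.single_zero, sub_zero, Nat.add_sub_cancel,
            ← Finsupp.single_sub]
          congr 1
          ring
      | succ m =>
          rw [show Polynomial.aeval (lam K f (m+1)) f = lam K f (m+2) from rfl]
          simp only [Nat.add_sub_cancel, ← Finsupp.single_sub]
          congr 1
          ring

def rep (f : Polynomial K) : GHA K f →ₐ[K] Module.End K (V K) :=
  RingQuot.liftAlgHom K ⟨Phi K f, Phi_rel f⟩

lemma comm_implies (f : Polynomial K) (h : ∀ a b : GHA K f, a * b = b * a) : f = X := by
  have h1 : Yq K f * Xq K = Xq K * Yq K f := by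
    have h0 := h (RingQuot.mkAlgHom K (ghaRel K f) (ι K (2 : Fin 3)))
      (RingQuot.mkAlgHom K (ghaRel K f) (ι K (1 : Fin 3)))
    have h2 := congrArg (rep f) h0
    simpa only [rep, map_mul, RingQuot.liftAlgHom_mkAlgHom_apply, Phi,
      FreeAlgebra.lift_ι_apply, Matrix.cons_val_one, Matrix.head_cons, Matrix.cons_val_zero, Matrix.cons_val_two,
      Matrix.tail_cons] using h2
  have h3 := DFunLike.congr_fun h1 (Finsupp.single 0 (1 : RatFunc K))
  simp only [Module.End.mul_apply, Xq_single, Yq_single, Nat.add_sub_cancel, sub_self,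
    zero_mul, Finsupp.single_zero, map_zero, mul_one] at h3
  have h4 : lam K f 1 = lam K f 0 := by
    have := Finsupp.single_eq_zero.mp h3
    linear_combination this
  have h5 : Polynomial.aeval RatFunc.X f = RatFunc.X := h4
  rw [← RatFunc.algebraMap_X, Polynomial.aeval_algebraMap_apply, Polynomial.aeval_X_left_apply] at h5
  exact IsFractionRing.injective K[X] (RatFunc K) h5

section XCase

local notation "mk" => RingQuot.mkAlgHom K (ghaRel K (X : Polynomial K))

lemma gens_comm (i j : Fin 3) :
    mk (ι K i) * mk (ι K j) = mk (ι K j) * mk (ι K i) := by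
  have e1 : mk (ι K (0 : Fin 3)) * mk (ι K (1 : Fin 3))
      = mk (ι K (1 : Fin 3)) * mk (ι K (0 : Fin 3)) := by
    have := RingQuot.mkAlgHom_rel K (ghaRel.r1 (K := K) (f := X))
    simpa only [map_mul, Polynomial.aeval_X] using this
  have e2 : mk (ι K (2 : Fin 3)) * mk (ι K (0 : Fin 3))
      = mk (ι K (0 : Fin 3)) * mk (ι K (2 : Fin 3)) := by
    have := RingQuot.mkAlgHom_rel K (ghaRel.r2 (K := K) (f := X))
    simpa only [map_mul, Polynomial.aeval_X] using this
  have e3 : mk (ι K (2 : Fin 3)) * mk (ι K (1 : Fin 3))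
      = mk (ι K (1 : Fin 3)) * mk (ι K (2 : Fin 3)) := by
    have := RingQuot.mkAlgHom_rel K (ghaRel.r3 (K := K) (f := X))
    simp only [map_sub, map_mul, Polynomial.aeval_X, sub_self, map_zero] at this
    exact sub_eq_zero.mp this
  fin_cases i <;> fin_cases j <;>
    first
      | rfl
      | exact e1 | exact e1.symm | exact e2 | exact e2.symm | exact e3 | exact e3.symm

lemma gha_X_comm : ∀ a b : GHA K (X : Polynomial K), a * b = b * a := by
  intro a b
  obtain ⟨u, rfl⟩ := RingQuot.mkAlgHom_surjective K (ghaRel K (X : Polynomial K)) a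
  obtain ⟨v, rfl⟩ := RingQuot.mkAlgHom_surjective K (ghaRel K (X : Polynomial K)) b
  revert v
  induction u with
  | grade0 r => intro v; simp [AlgHom.commutes, Algebra.commutes]
  | grade1 i =>
      intro v
      induction v with
      | grade0 r => simp [AlgHom.commutes, Algebra.commutes]
      | grade1 j => exact gens_comm i j
      | mul v w hv hw => rw [map_mul, ← mul_assoc, hv, mul_assoc, hw, ← mul_assoc]
      | add v w hv hw => rw [map_add, mul_add, add_mul, hv, hw]
  | mul u w hu hw => intro v; rw [map_mul, mul_assoc, hw, ← mul_assoc, hu, mul_assoc]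
  | add u w hu hw => intro v; rw [map_add, add_mul, mul_add, hu, hw]

end XCase

lemma Fhom_rel : ∀ ⦃u v⦄, ghaRel K (X : Polynomial K) u v →
    FreeAlgebra.lift K (fun i => MvPolynomial.X (R := K) i) u
      = FreeAlgebra.lift K (fun i => MvPolynomial.X (R := K) i) v := by
  intro u v h
  induction h <;>
    simp only [Polynomial.aeval_X, map_mul, map_sub, FreeAlgebra.lift_ι_apply, sub_self, map_zero] <;>
    ring

def Fhom : GHA K (X : Polynomial K) →ₐ[K] MvPolynomial (Fin 3) K :=
  RingQuot.liftAlgHom K ⟨FreeAlgebra.lift K (fun i => MvPolynomial.X (R := K) i), Fhom_rel⟩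


end GhaAux

open GhaAux in
/-- `H(f)` is commutative iff `f = t`; in that case
`H(f) ≅ K[t,x,y]`, the polynomial ring in three variables. -/
theorem stmt9 (f : Polynomial K) :
    ((∀ a b : GHA K f, a * b = b * a) ↔ f = X) ∧
      (f = X → Nonempty (GHA K f ≃ₐ[K] MvPolynomial (Fin 3) K)) := by
  refine ⟨⟨GhaAux.comm_implies f, ?_⟩, ?_⟩
  · rintro rfl; exact GhaAux.gha_X_comm
  · rintro rfl
    letI : CommRing (GHA K (X : Polynomial K)) :=
      { (inferInstance : Ring (GHA K (X : Polynomial K))) with mul_comm := GhaAux.gha_X_comm }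
    refine ⟨AlgEquiv.ofAlgHom GhaAux.Fhom
      (MvPolynomial.aeval fun i => RingQuot.mkAlgHom K (ghaRel K (X : Polynomial K)) (ι K i))
      ?_ ?_⟩
    · apply MvPolynomial.algHom_ext
      intro i
      simp [GhaAux.Fhom, RingQuot.liftAlgHom_mkAlgHom_apply]
    · apply RingQuot.ringQuot_ext'
      apply FreeAlgebra.hom_ext
      funext i
      simp [GhaAux.Fhom, RingQuot.liftAlgHom_mkAlgHom_apply]

end
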